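/- Let n ∈ ℕ, A : Fin n → Bool, and k ≤ t ≤ n such that the t-prefix of A is partitioned with the predecessors first: for every i < t, A i = false if and only if i < k. Let m = |{i : t ≤ i < n ∧ A i = false}| be the number of predecessors in the suffix, and assume m ≤ t - k (the prefix contains at least m successors). Let p_1 < p_2 < … < p_m be the increasing enumeration of the indices i with t ≤ i < n and A i = false. Then the positions k, k+1, …, k+m-1 all lie in the prefix (k + m ≤ t) and all hold successors, the 2m positions {k, …, k+m-1} ∪ {p_1, …, p_m} are pairwise distinct, and the permutation σ of Fin n obtained as the product of the m disjoint transpositions swapping position k+j-1 with position p_j (for j = 1, …, m) yields a fully partitioned array: the array B = A ∘ σ satisfies B i = false if and only if i < k + m. -/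

import Mathlib

private lemma prod_fix' {α : Type*} (l : List (Equiv.Perm α)) (i : α)
    (h : ∀ g ∈ l, g i = i) : l.prod i = i := by
  induction l with
  | nil => simp
  | cons a l ih =>
    simp only [List.prod_cons, Equiv.Perm.mul_apply]
    rw [ih (fun g hg => h g (List.mem_cons_of_mem _ hg)), h a List.mem_cons_self]

private lemma prod_ofFn_apply' {α : Type*} : ∀ {m : ℕ} (f : Fin m → Equiv.Perm α) (j : Fin m)
    (i : α), (∀ j', j' ≠ j → f j' i = i) → (∀ j', j' ≠ j → f j' (f j i) = f j i) →
    (List.ofFn f).prod i = f j i := by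
  intro m
  induction m with
  | zero => exact fun f j => j.elim0
  | succ m ih =>
    intro f j i h1 h2
    rw [List.ofFn_succ, List.prod_cons, Equiv.Perm.mul_apply]
    rcases Fin.eq_zero_or_eq_succ j with rfl | ⟨j', rfl⟩
    · rw [prod_fix']
      intro g hg
      rw [List.mem_ofFn] at hg
      obtain ⟨j'', rfl⟩ := hg
      exact h1 _ (Fin.succ_ne_zero j'')
    · rw [ih (fun j'' => f j''.succ) j' i
        (fun j'' hj => h1 j''.succ (fun h' => hj (Fin.succ_injective _ h')))
        (fun j'' hj => h2 j''.succ (fun h' => hj (Fin.succ_injective _ h')))]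
      exact h2 0 (Fin.succ_ne_zero j').symm

theorem reorder_swaps_complete_partition (n k t : ℕ) (A : Fin n → Bool)
    (hkt : k ≤ t) (htn : t ≤ n)
    (hpart : ∀ i : Fin n, (i : ℕ) < t → (A i = false ↔ (i : ℕ) < k))
    (m : ℕ)
    (hm : m = (Finset.univ.filter fun i : Fin n => t ≤ (i : ℕ) ∧ A i = false).card)
    (hmtk : m ≤ t - k)
    (p : Fin m → Fin n) (hpmono : StrictMono p)
    (hpmem : ∀ j : Fin m, t ≤ (p j : ℕ) ∧ A (p j) = false)
    (hponto : ∀ i : Fin n, t ≤ (i : ℕ) → A i = false → ∃ j : Fin m, p j = i) :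
    ∃ hkm : k + m ≤ t,
      (∀ j : Fin m, A ⟨k + (j : ℕ), by have := j.isLt; omega⟩ = true) ∧
      (∀ j l : Fin m, k + (j : ℕ) ≠ (p l : ℕ)) ∧
      (∀ i : Fin n,
        A ((List.ofFn fun j : Fin m =>
              Equiv.swap (⟨k + (j : ℕ), by have := j.isLt; omega⟩ : Fin n) (p j)).prod i)
            = false ↔ (i : ℕ) < k + m) := by
  have hkm : k + m ≤ t := by omega
  have hAkj : ∀ j : Fin m, A ⟨k + (j : ℕ), by have := j.isLt; omega⟩ = true := by
    intro j
    have hx : ((⟨k + (j : ℕ), by have := j.isLt; omega⟩ : Fin n) : ℕ) < t := by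
      show k + (j : ℕ) < t; have := j.isLt; omega
    rcases Bool.eq_false_or_eq_true (A ⟨k + (j : ℕ), by have := j.isLt; omega⟩) with h0 | h0
    · exact h0
    · exfalso
      have h1 := (hpart _ hx).mp h0
      have h2 : ((⟨k + (j : ℕ), by have := j.isLt; omega⟩ : Fin n) : ℕ) = k + (j : ℕ) := rfl
      omega
  refine ⟨hkm, hAkj, fun j l => ?_, ?_⟩
  · have := (hpmem l).1
    have := j.isLt
    omega
  · intro i
    set f : Fin m → Equiv.Perm (Fin n) := fun j : Fin m =>
      Equiv.swap (⟨k + (j : ℕ), by have := j.isLt; omega⟩ : Fin n) (p j) with hf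
    show A ((List.ofFn f).prod i) = false ↔ (i : ℕ) < k + m
    have hfix : ∀ (x : Fin n), (∀ j : Fin m, (x : ℕ) ≠ k + (j : ℕ) ∧ x ≠ p j) →
        (List.ofFn f).prod x = x := by
      intro x hx
      apply prod_fix'
      intro g hg
      rw [List.mem_ofFn] at hg
      obtain ⟨j, rfl⟩ := hg
      exact Equiv.swap_apply_of_ne_of_ne (Fin.ne_of_val_ne (hx j).1) (hx j).2
    rcases lt_or_ge (i : ℕ) k with hik | hik
    · -- i < k : fixed, A i = false
      rw [hfix i (fun j => ⟨by omega,
        Fin.ne_of_val_ne (show (i : ℕ) ≠ ((p j : ℕ)) by have := (hpmem j).1; omega)⟩)]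
      have := (hpart i (by omega)).mpr hik
      simp [this]
      omega
    · rcases lt_or_ge (i : ℕ) (k + m) with him | him
      · -- k ≤ i < k + m : i = ⟨k + j⟩, maps to p j
        obtain ⟨j, hjv⟩ : ∃ j : Fin m, (j : ℕ) = (i : ℕ) - k := ⟨⟨_, by omega⟩, rfl⟩
        have hieq : i = (⟨k + (j : ℕ), by have := j.isLt; omega⟩ : Fin n) := by
          apply Fin.ext; show (i : ℕ) = k + (j : ℕ); omega
        have hfji : f j i = p j := by
          rw [hf]; simp only; rw [hieq, Equiv.swap_apply_left]
        have hstep : (List.ofFn f).prod i = f j i := by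
          apply prod_ofFn_apply'
          · intro j' hj'
            apply Equiv.swap_apply_of_ne_of_ne
            · apply Fin.ne_of_val_ne
              show (i : ℕ) ≠ k + (j' : ℕ)
              intro h
              apply hj'
              apply Fin.ext
              omega
            · exact Fin.ne_of_val_ne
                (show (i : ℕ) ≠ (p j' : ℕ) by have := (hpmem j').1; omega)
          · intro j' hj'
            rw [hfji]
            apply Equiv.swap_apply_of_ne_of_ne
            · exact Fin.ne_of_val_ne (show ((p j : ℕ)) ≠ k + (j' : ℕ) by
                have := (hpmem j).1; have := j'.isLt; omega)
            · exact fun h => hj' (hpmono.injective h.symm)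
        rw [hstep, hfji]
        simp [(hpmem j).2, him]
      · rcases lt_or_ge (i : ℕ) t with hit | hit
        · -- k + m ≤ i < t : fixed, A i = true
          rw [hfix i (fun j => ⟨by have := j.isLt; omega,
            Fin.ne_of_val_ne (show (i : ℕ) ≠ ((p j : ℕ)) by have := (hpmem j).1; omega)⟩)]
          have hAi : A i = true := by
            rcases Bool.eq_false_or_eq_true (A i) with h0 | h0
            · exact h0
            · exfalso; have := (hpart i hit).mp h0; omega
          simp [hAi]
          omega
        · -- t ≤ i
          rcases Bool.eq_false_or_eq_true (A i) with h0 | h0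
          · -- A i = true : fixed
            rw [hfix i (fun j => ⟨by have := j.isLt; omega,
              fun h => by rw [h, (hpmem j).2] at h0; exact Bool.false_ne_true h0⟩)]
            simp [h0]
            omega
          · -- A i = false : i = p j, maps to ⟨k + j⟩
            obtain ⟨j, rfl⟩ := hponto i hit h0
            have hfji : f j (p j) = ⟨k + (j : ℕ), by have := j.isLt; omega⟩ := by
              rw [hf]; simp only; rw [Equiv.swap_apply_right]
            have hstep : (List.ofFn f).prod (p j) = f j (p j) := by
              apply prod_ofFn_apply'
              · intro j' hj'
                apply Equiv.swap_apply_of_ne_of_ne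
                · exact Fin.ne_of_val_ne (show ((p j : ℕ)) ≠ k + (j' : ℕ) by
                    have := j'.isLt; omega)
                · exact fun h => hj' (hpmono.injective h.symm)
              · intro j' hj'
                rw [hfji]
                apply Equiv.swap_apply_of_ne_of_ne
                · apply Fin.ne_of_val_ne
                  show k + (j : ℕ) ≠ k + (j' : ℕ)
                  intro h
                  exact hj' (Fin.ext (by omega : (j' : ℕ) = (j : ℕ)))
                · exact Fin.ne_of_val_ne (show (k + (j : ℕ)) ≠ ((p j' : ℕ)) by
                    have := (hpmem j').1; have := j.isLt; omega)
            rw [hstep, hfji]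
            simp [hAkj j]
            omega
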